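/- Let ν and μ be partitions, let n be a positive integer, and let T be a set-valued tableau of shape ν∗μ such that the reverse reading word w(T) is a lattice word with content ρ_n = (n, n−1, …, 1). Then every cell in the i-th row of the ν-part of ν∗μ contains exactly the singleton set {i}. -/

import Mathlib

open Finset

namespace Stembridge

/-- The staircase partition `ρ_n = (n, n-1, …, 1)` as a Young diagram
(cells `(i, j)` with `i + j < n`, matrix coordinates, 0-indexed). -/
def staircase (n : ℕ) : YoungDiagram where
  cells := (Finset.range n ×ˢ Finset.range n).filter fun c => c.1 + c.2 < n
  isLowerSet := by
    rintro ⟨i₁, j₁⟩ ⟨i₂, j₂⟩ hle hmem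
    obtain ⟨hi, hj⟩ := hle
    simp only [Finset.mem_coe, Finset.mem_filter, Finset.mem_product, Finset.mem_range] at hmem ⊢
    omega

/-- The one-row partition `(k)` as a Young diagram. -/
def rowShape (k : ℕ) : YoungDiagram where
  cells := ({0} : Finset ℕ) ×ˢ Finset.range k
  isLowerSet := by
    rintro ⟨i₁, j₁⟩ ⟨i₂, j₂⟩ hle hmem
    obtain ⟨hi, hj⟩ := hle
    simp only [Finset.mem_coe, Finset.mem_product, Finset.mem_singleton, Finset.mem_range] at hmem ⊢
    omega

/-- The one-column partition `(1^k)` as a Young diagram. -/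
def colShape (k : ℕ) : YoungDiagram where
  cells := Finset.range k ×ˢ ({0} : Finset ℕ)
  isLowerSet := by
    rintro ⟨i₁, j₁⟩ ⟨i₂, j₂⟩ hle hmem
    obtain ⟨hi, hj⟩ := hle
    simp only [Finset.mem_coe, Finset.mem_product, Finset.mem_singleton, Finset.mem_range] at hmem ⊢
    omega

/-- The cells of the skew diagram `λ/μ`. -/
def skewCells (μ lam : YoungDiagram) : Finset (ℕ × ℕ) := lam.cells \ μ.cells

/-- A reverse plane partition on a finite shape of cells: a filling of the cells with
positive integers which weakly increases along rows (left to right) and down columns.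
Entries outside the shape are `0`. -/
structure RPP (shape : Finset (ℕ × ℕ)) where
  entry : ℕ × ℕ → ℕ
  pos : ∀ c ∈ shape, 0 < entry c
  zero_off : ∀ c, c ∉ shape → entry c = 0
  row_le : ∀ i j, (i, j) ∈ shape → (i, j + 1) ∈ shape → entry (i, j) ≤ entry (i, j + 1)
  col_le : ∀ i j, (i, j) ∈ shape → (i + 1, j) ∈ shape → entry (i, j) ≤ entry (i + 1, j)

/-- The weight of a reverse plane partition: `weight P i` is the number of columns of the
shape containing an entry equal to `i`. -/
def RPP.weight {shape : Finset (ℕ × ℕ)} (P : RPP shape) (i : ℕ) : ℕ :=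
  ((shape.filter fun c => P.entry c = i).image Prod.snd).card

/-- A set-valued tableau on a finite shape of cells: a filling of the cells by finite
nonempty sets of positive integers such that `max(left) ≤ min(right)` for horizontally
adjacent cells and `max(upper) < min(lower)` for vertically adjacent cells.
Cells outside the shape carry `∅`. -/
structure SVT (shape : Finset (ℕ × ℕ)) where
  entry : ℕ × ℕ → Finset ℕ
  nonempty : ∀ c ∈ shape, (entry c).Nonempty
  pos : ∀ c ∈ shape, ∀ x ∈ entry c, 0 < x
  empty_off : ∀ c, c ∉ shape → entry c = ∅
  row_le : ∀ i j, (i, j) ∈ shape → (i, j + 1) ∈ shape →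
    ∀ a ∈ entry (i, j), ∀ b ∈ entry (i, j + 1), a ≤ b
  col_lt : ∀ i j, (i, j) ∈ shape → (i + 1, j) ∈ shape →
    ∀ a ∈ entry (i, j), ∀ b ∈ entry (i + 1, j), a < b

/-- The content of a set-valued tableau: `content T i` is the number of cells whose
set contains `i`. -/
def SVT.content {shape : Finset (ℕ × ℕ)} (T : SVT shape) (i : ℕ) : ℕ :=
  (shape.filter fun c => i ∈ T.entry c).card

/-- The reverse reading word of a set-valued tableau: read the columns from rightmost to
leftmost, each column from top to bottom, the elements within a cell in decreasing order. -/
def SVT.word {shape : Finset (ℕ × ℕ)} (T : SVT shape) : List ℕ :=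
  ((List.range (shape.sup Prod.snd + 1)).reverse).flatMap fun j =>
    (List.range (shape.sup Prod.fst + 1)).flatMap fun i =>
      ((T.entry (i, j)).sort (· ≤ ·)).reverse

/-- A word is a lattice word if in every prefix, for every `a ≥ 1`, the number of
occurrences of `a+1` is at most the number of occurrences of `a` (equivalently, the `i`-th
occurrence of `a+1` comes after the `i`-th occurrence of `a`). -/
def IsLatticeWord (w : List ℕ) : Prop :=
  ∀ t a, 1 ≤ a → (w.take t).count (a + 1) ≤ (w.take t).count a

/-- The content of the staircase partition `ρ_n` as a function: `a ↦ n + 1 - a`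
(so `a ↦ 0` for `a > n`), for `a ≥ 1`. -/
def staircaseContent (n : ℕ) : ℕ → ℕ := fun a => n + 1 - a

/-- A semistandard Young tableau on a finite shape of cells: a filling with positive
integers weakly increasing along rows and strictly increasing down columns.
Entries outside the shape are `0`. -/
structure SSYT (shape : Finset (ℕ × ℕ)) where
  entry : ℕ × ℕ → ℕ
  pos : ∀ c ∈ shape, 0 < entry c
  zero_off : ∀ c, c ∉ shape → entry c = 0
  row_le : ∀ i j, (i, j) ∈ shape → (i, j + 1) ∈ shape → entry (i, j) ≤ entry (i, j + 1)
  col_lt : ∀ i j, (i, j) ∈ shape → (i + 1, j) ∈ shape → entry (i, j) < entry (i + 1, j)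

/-- The type of a semistandard Young tableau: `type T i` is the number of entries equal
to `i`. -/
def SSYT.type {shape : Finset (ℕ × ℕ)} (T : SSYT shape) (i : ℕ) : ℕ :=
  (shape.filter fun c => T.entry c = i).card

/-- The cells of the skew shape `ν∗μ`: `μ` occupies the lower-left block and `ν` the
upper-right block, the top-right corner of `μ` touching the bottom-left corner of `ν`. -/
def starCells (ν μ : YoungDiagram) : Finset (ℕ × ℕ) :=
  ν.cells.image (fun c => (c.1, c.2 + μ.rowLen 0)) ∪
    μ.cells.image (fun c => (c.1 + ν.colLen 0, c.2))

/-- The number of reverse plane partitions of shape `λ/μ` with weight `w` (with the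
convention that this is `0` if `μ ⊄ λ`). -/
noncomputable def rppCount (lam μ : YoungDiagram) (w : ℕ →₀ ℕ) : ℕ :=
  if μ.cells ⊆ lam.cells then
    Nat.card {P : RPP (skewCells μ lam) // ∀ i, 1 ≤ i → P.weight i = w i}
  else 0

/-- The number of set-valued tableaux of shape `λ/μ` with content `m` (with the
convention that this is `0` if `μ ⊄ λ`). -/
noncomputable def svtCount (lam μ : YoungDiagram) (m : ℕ →₀ ℕ) : ℕ :=
  if μ.cells ⊆ lam.cells then
    Nat.card {T : SVT (skewCells μ lam) // ∀ i, 1 ≤ i → T.content i = m i}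
  else 0

/-- The number of semistandard Young tableaux of shape `λ/μ` of type `α` (with the
convention that this is `0` if `μ ⊄ λ`). -/
noncomputable def ssytCount (lam μ : YoungDiagram) (α : ℕ →₀ ℕ) : ℕ :=
  if μ.cells ⊆ lam.cells then
    Nat.card {T : SSYT (skewCells μ lam) // ∀ i, 1 ≤ i → T.type i = α i}
  else 0

/-- The number of set-valued tableaux of a given shape whose reverse reading word is a
lattice word with content `c` (indexed from 1). -/
noncomputable def latticeCount (shape : Finset (ℕ × ℕ)) (c : ℕ → ℕ) : ℕ :=
  Nat.card {T : SVT shape // IsLatticeWord T.word ∧ ∀ a, 1 ≤ a → T.word.count a = c a}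

-- auxiliary lemmas

lemma measure_lt {r M j k i i' : ℕ} (hjk : j < k) (hkr : k < r) (hi' : i' < M) :
    (r - 1 - k) * M + i' < (r - 1 - j) * M + i := by
  have h1 : r - 1 - k + 1 ≤ r - 1 - j := by omega
  calc (r - 1 - k) * M + i' < (r - 1 - k) * M + M := by omega
    _ = (r - 1 - k + 1) * M := by ring
    _ ≤ (r - 1 - j) * M := Nat.mul_le_mul_right M h1
    _ ≤ (r - 1 - j) * M + i := Nat.le_add_right _ _

lemma flatMap_range_reverse_split (f : ℕ → List ℕ) {j n : ℕ} (h : j < n) :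
    (List.range n).reverse.flatMap f =
      ((List.range (n - (j + 1))).map (j + 1 + ·)).reverse.flatMap f ++ f j ++
        (List.range j).reverse.flatMap f := by
  have hn : n = (j + 1) + (n - (j + 1)) := by omega
  rw [hn, List.range_add, List.range_succ]
  simp [List.flatMap_append, List.reverse_append]

lemma flatMap_range_split (f : ℕ → List ℕ) {i n : ℕ} (h : i < n) :
    (List.range n).flatMap f =
      (List.range i).flatMap f ++ f i ++
        ((List.range (n - (i + 1))).map (i + 1 + ·)).flatMap f := by
  have hn : n = i + 1 + (n - (i + 1)) := by omega
  rw [hn, List.range_add, List.range_succ]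
  simp [List.flatMap_append]

lemma mem_starCells_of_nu {ν μ : YoungDiagram} {i j : ℕ} (h : (i, j) ∈ ν.cells) :
    (i, j + μ.rowLen 0) ∈ starCells ν μ := by
  apply Finset.mem_union_left
  exact Finset.mem_image.2 ⟨(i, j), h, rfl⟩

lemma starCells_right {ν μ : YoungDiagram} {i' j' : ℕ} (h : (i', j') ∈ starCells ν μ)
    (hc : μ.rowLen 0 ≤ j') : ∃ k, j' = k + μ.rowLen 0 ∧ (i', k) ∈ ν.cells := by
  rcases Finset.mem_union.1 h with h' | h'
  · obtain ⟨⟨a, b⟩, hab, heq⟩ := Finset.mem_image.1 h'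
    obtain ⟨h1, h2⟩ := Prod.mk.injEq .. ▸ heq
    exact ⟨b, by omega, by simpa [← h1] using hab⟩
  · obtain ⟨⟨a, b⟩, hab, heq⟩ := Finset.mem_image.1 h'
    obtain ⟨h1, h2⟩ := Prod.mk.injEq .. ▸ heq
    exfalso
    have : b < μ.rowLen 0 := YoungDiagram.mem_iff_lt_rowLen.1 (μ.up_left_mem (Nat.zero_le _) le_rfl hab)
    omega

/-- In a set-valued tableau of shape `ν∗μ` whose reverse reading word is a lattice word
with content `ρ_n = (n, n-1, …, 1)`, every cell in the `i`-th row of the `ν`-part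
contains exactly the singleton `{i}` (here rows are 0-indexed, so the cell `(i, j)` of
`ν` carries the set `{i + 1}`). -/
theorem nu_part_rows_of_lattice (ν μ : YoungDiagram) (n : ℕ) (hn : 1 ≤ n)
    (T : SVT (starCells ν μ)) (hlat : IsLatticeWord T.word)
    (hcont : ∀ a, 1 ≤ a → T.word.count a = staircaseContent n a) :
    ∀ i j, (i, j) ∈ ν.cells → T.entry (i, j + μ.rowLen 0) = {i + 1} := by
  classical
  set c := μ.rowLen 0 with hc
  set r := ν.rowLen 0 with hr
  set M := ν.colLen 0 with hM
  set J := (starCells ν μ).sup Prod.snd with hJdef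
  set I := (starCells ν μ).sup Prod.fst with hIdef
  suffices H : ∀ t i j, (i, j) ∈ ν.cells → (r - 1 - j) * M + i ≤ t →
      T.entry (i, j + c) = {i + 1} by
    intro i j hij
    exact H _ i j hij le_rfl
  intro t
  induction t using Nat.strong_induction_on with
  | _ t IH =>
  intro i j hij hm
  -- basic facts
  have hjr : j < r := YoungDiagram.mem_iff_lt_rowLen.1 (ν.up_left_mem (Nat.zero_le _) le_rfl hij)
  have hiM : i < M := lt_of_lt_of_le (YoungDiagram.mem_iff_lt_colLen.1 hij) (ν.colLen_anti 0 j (Nat.zero_le _))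
  have hshape : (i, j + c) ∈ starCells ν μ := mem_starCells_of_nu hij
  have hJ : j + c ≤ J := Finset.le_sup (f := Prod.snd) hshape
  have hI : i ≤ I := Finset.le_sup (f := Prod.fst) hshape
  -- packaged induction hypothesis
  have IHcell : ∀ i' j', (i', j') ∈ ν.cells →
      (r - 1 - j') * M + i' < (r - 1 - j) * M + i → T.entry (i', j' + c) = {i' + 1} := by
    intro i' j' h1 h2
    exact IH _ (lt_of_lt_of_le h2 hm) i' j' h1 le_rfl
  have hne : (T.entry (i, j + c)).Nonempty := T.nonempty _ hshape
  -- lower bound: every element of S is ≥ i + 1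
  have hlow : ∀ x ∈ T.entry (i, j + c), i + 1 ≤ x := by
    intro x hx
    rcases Nat.eq_zero_or_pos i with h0 | hpos
    · subst h0
      exact T.pos _ hshape x hx
    · have e : i - 1 + 1 = i := by omega
      have hup : (i - 1, j) ∈ ν.cells := ν.up_left_mem (by omega) le_rfl hij
      have hprev : T.entry (i - 1, j + c) = {i - 1 + 1} := IHcell (i - 1) j hup (by omega)
      have hsh2 : (i - 1 + 1, j + c) ∈ starCells ν μ := by rw [e]; exact hshape
      have hx' : x ∈ T.entry (i - 1 + 1, j + c) := by rw [e]; exact hx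
      have := T.col_lt (i - 1) (j + c) (mem_starCells_of_nu hup) hsh2 (i - 1 + 1)
        (by rw [hprev]; exact Finset.mem_singleton_self _) x hx'
      omega
  -- upper bound: every element of S is ≤ i + 1
  have hhigh : ∀ x ∈ T.entry (i, j + c), x ≤ i + 1 := by
    by_cases hnb : (i, j + 1) ∈ ν.cells
    · -- right neighbour exists: use row_le
      intro x hx
      have hright : T.entry (i, (j + 1) + c) = {i + 1} :=
        IHcell i (j + 1) hnb (measure_lt (Nat.lt_succ_self j)
          (YoungDiagram.mem_iff_lt_rowLen.1 (ν.up_left_mem (Nat.zero_le _) le_rfl hnb)) hiM)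
      have h2 : ((j + 1) + c) = (j + c) + 1 := by omega
      rw [h2] at hright
      exact T.row_le i (j + c) hshape (by rw [← h2]; exact mem_starCells_of_nu hnb) x hx (i + 1)
        (by rw [hright]; exact Finset.mem_singleton_self _)
    · -- no right neighbour: lattice word argument
      -- every cell read before (i, j+c) contains only entries ≤ i
      -- first, decompose the word
      set g : ℕ → ℕ → List ℕ := fun j' i' => ((T.entry (i', j')).sort (· ≤ ·)).reverse with hg
      set f : ℕ → List ℕ := fun j' => (List.range (I + 1)).flatMap (g j') with hf
      have hword : T.word = (List.range (J + 1)).reverse.flatMap f := rfl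
      set B : List ℕ := ((List.range (J + 1 - (j + c + 1))).map (j + c + 1 + ·)).reverse.flatMap f with hB
      set C : List ℕ := (List.range (j + c)).reverse.flatMap f with hC
      have hW1 : T.word = B ++ f (j + c) ++ C := by
        rw [hword, flatMap_range_reverse_split f (by omega : j + c < J + 1)]
      set D : List ℕ := (List.range i).flatMap (g (j + c)) with hD
      set E : List ℕ := ((List.range (I + 1 - (i + 1))).map (i + 1 + ·)).flatMap (g (j + c)) with hE
      have hfj : f (j + c) = D ++ g (j + c) i ++ E :=
        flatMap_range_split (g (j + c)) (by omega : i < I + 1)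
      -- the head of g (j+c) i is the max of S
      have hlne : ((T.entry (i, j + c)).sort (· ≤ ·)).reverse ≠ [] := by
        simp only [ne_eq, List.reverse_eq_nil_iff]
        intro h
        obtain ⟨x, hx⟩ := hne
        have := (Finset.mem_sort (α := ℕ) (· ≤ ·)).2 hx
        rw [h] at this
        simp at this
      obtain ⟨b, tl, hbt⟩ := List.exists_cons_of_ne_nil hlne
      have hbS : b ∈ T.entry (i, j + c) := by
        have : b ∈ ((T.entry (i, j + c)).sort (· ≤ ·)).reverse := hbt ▸ List.mem_cons_self
        rwa [List.mem_reverse, Finset.mem_sort] at this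
      have hbmax : ∀ y ∈ T.entry (i, j + c), y ≤ b := by
        intro y hy
        have hy' : y ∈ ((T.entry (i, j + c)).sort (· ≤ ·)).reverse := by
          rw [List.mem_reverse, Finset.mem_sort]; exact hy
        rw [hbt, List.mem_cons] at hy'
        rcases hy' with rfl | hy'
        · exact le_rfl
        · have hsorted : List.Pairwise (fun a b : ℕ => a ≤ b)
              ((T.entry (i, j + c)).sort (· ≤ ·)) := Finset.pairwise_sort ..
          have hp := List.pairwise_reverse.2 hsorted
          rw [hbt, List.pairwise_cons] at hp
          exact hp.1 y hy'
      -- it suffices to show b ≤ i + 1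
      intro x hx
      have hxb : x ≤ b := hbmax x hx
      by_contra hcon
      push_neg at hcon
      have hbige : i + 2 ≤ b := by omega
      -- all elements of B ++ D are ≤ i
      have hAle : ∀ y ∈ B ++ D, y ≤ i := by
        intro y hy
        rw [List.mem_append] at hy
        rcases hy with hy | hy
        · -- y in an earlier column
          rw [hB, List.mem_flatMap] at hy
          obtain ⟨j', hj', hy⟩ := hy
          rw [List.mem_reverse, List.mem_map] at hj'
          obtain ⟨k0, hk0, rfl⟩ := hj'
          rw [hf, List.mem_flatMap] at hy
          obtain ⟨i', hi', hy⟩ := hy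
          rw [hg] at hy
          rw [List.mem_reverse, Finset.mem_sort] at hy
          by_cases hsh : (i', j + c + 1 + k0) ∈ starCells ν μ
          · obtain ⟨k, hkeq, hkν⟩ := starCells_right hsh (by omega)
            have hkj : j < k := by omega
            have hi'i : i' < i := by
              by_contra hii
              push_neg at hii
              exact hnb (ν.up_left_mem hii (by omega) hkν)
            have hkν1 : (i', j + 1) ∈ ν.cells := ν.up_left_mem le_rfl (by omega) hkν
            have hkr : k < r :=
              YoungDiagram.mem_iff_lt_rowLen.1 (ν.up_left_mem (Nat.zero_le _) le_rfl hkν)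
            have hi'M : i' < M := lt_of_lt_of_le (YoungDiagram.mem_iff_lt_colLen.1 hkν)
              (ν.colLen_anti 0 k (Nat.zero_le _))
            have := IHcell i' k hkν (measure_lt hkj hkr hi'M)
            rw [← hkeq] at this
            rw [this, Finset.mem_singleton] at hy
            omega
          · rw [T.empty_off _ hsh] at hy
            simp at hy
        · -- y above in the same column
          rw [hD, List.mem_flatMap] at hy
          obtain ⟨i', hi', hy⟩ := hy
          rw [List.mem_range] at hi'
          rw [hg, List.mem_reverse, Finset.mem_sort] at hy
          have hup : (i', j) ∈ ν.cells := ν.up_left_mem (by omega) le_rfl hij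
          have := IHcell i' j hup (by omega)
          rw [this, Finset.mem_singleton] at hy
          omega
      -- the prefix B ++ D ++ [b]
      have hW2 : T.word = (B ++ D) ++ (b :: (tl ++ (E ++ C))) := by
        rw [hW1, hfj]
        have : g (j + c) i = b :: tl := by rw [hg]; exact hbt
        rw [this]
        simp [List.append_assoc]
      have htake : T.word.take ((B ++ D).length + 1) = (B ++ D) ++ [b] := by
        rw [hW2, List.take_append]
        simp [List.take_of_length_le (by simp : (B ++ D).length ≤ B.length + D.length + 1)]
      have hlat' := hlat ((B ++ D).length + 1) (b - 1) (by omega)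
      rw [htake] at hlat'
      have hb1 : b - 1 + 1 = b := by omega
      rw [hb1] at hlat'
      have h1 : ((B ++ D) ++ [b]).count b ≥ 1 := by
        rw [List.count_append]
        simp
      have h2 : ((B ++ D) ++ [b]).count (b - 1) = 0 := by
        rw [List.count_append, List.count_eq_zero.2, List.count_eq_zero.2]
        · intro hmem
          rw [List.mem_singleton] at hmem
          omega
        · intro hmem
          have := hAle _ hmem
          omega
      omega
  -- conclude S = {i+1}
  apply Finset.eq_singleton_iff_unique_mem.2
  constructor
  · obtain ⟨x, hx⟩ := hne
    have := hlow x hx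
    have := hhigh x hx
    have hxe : x = i + 1 := by omega
    rwa [← hxe]
  · intro x hx
    have := hlow x hx
    have := hhigh x hx
    omega



end Stembridge
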